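/- arXiv:2309.01583 — 5 statements merged into one kernel-verified Lean document; each statement's English description precedes it below -/
import Mathlib

section
/- Let G be a finite simple graph of order 3, let C_1,…,C_p be a partition of V(G) into p disjoint independent sets, and let D_1,…,D_s be some s ≥ 1 of the sets C_1,…,C_p. Then χ_gb(G; D_1,…,D_s) ≤ p − 1. -/
open Function

namespace GameCol

variable {V : Type*} [Fintype V] [DecidableEq V]

/-- A finite set of vertices is independent in `G`. -/
def IsIndepF (G : SimpleGraph V) (s : Finset V) : Prop :=
  ∀ u ∈ s, ∀ v ∈ s, ¬ G.Adj u v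

/-! ### The vertex colouring game.

A position is a partial proper colouring `f : V → Option ℕ` (`none` = uncoloured);
the palette consists of the `k` colours `0, …, k-1`.  The `Bool` records whose turn
it is (`true` = Maker).  Players alternate, Maker moving first, always making a legal
move if one exists; the game ends when the player to move has no legal move, and
Maker wins if and only if the whole graph is then coloured. -/

/-- Colour `c` may legally be played at `v`. -/
def ColLegal (G : SimpleGraph V) (k : ℕ) (f : V → Option ℕ) (v : V) (c : ℕ) : Prop :=
  c < k ∧ f v = none ∧ ∀ u, G.Adj v u → f u ≠ some c

/-- Every vertex is coloured. -/
def FullC (f : V → Option ℕ) : Prop := ∀ v, f v ≠ none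

/-- Maker wins the vertex colouring game from the given position with optimal play
(`fuel` is an upper bound on the number of remaining moves). -/
def MakerWinsC (G : SimpleGraph V) (k : ℕ) : ℕ → (V → Option ℕ) → Bool → Prop
  | 0, f, _ => FullC f
  | fuel + 1, f, true => FullC f ∨
      ∃ v c, ColLegal G k f v c ∧ MakerWinsC G k fuel (update f v (some c)) false
  | fuel + 1, f, false => FullC f ∨
      ((∃ v c, ColLegal G k f v c) ∧
        ∀ v c, ColLegal G k f v c → MakerWinsC G k fuel (update f v (some c)) true)

/-- The game chromatic number `χ_g(G)`: the least number of colours for which Maker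
has a winning strategy in the vertex colouring game. -/
noncomputable def gameChromaticNumber (G : SimpleGraph V) : ℕ :=
  sInf {k | MakerWinsC G k (Fintype.card V) (fun _ => none) true}

/-! ### The vertex colouring game with blanks.

Positions are `f : V → Option (Option ℕ)`: `none` = unplayed, `some none` = blank,
`some (some c)` = coloured with colour `c`.  The palette is a finite set `K ⊆ ℕ` of
colours.  On her turn Maker must play a colour; on his turn Breaker may play a colour,
or a blank at any unplayed vertex.  The game ends as soon as no vertex can legally
receive a colour, and Maker wins iff every vertex is then coloured or blank. -/

/-- Colour `c` may legally be played at `v` (blanks put no restriction on their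
neighbours). -/
def BColLegal (G : SimpleGraph V) (K : Finset ℕ) (f : V → Option (Option ℕ))
    (v : V) (c : ℕ) : Prop :=
  c ∈ K ∧ f v = none ∧ ∀ u, G.Adj v u → f u ≠ some (some c)

/-- Every vertex is coloured or blank. -/
def AllPlayed (f : V → Option (Option ℕ)) : Prop := ∀ v, f v ≠ none

/-- Maker wins the vertex colouring game with blanks from the given position. -/
def MakerWinsB (G : SimpleGraph V) (K : Finset ℕ) :
    ℕ → (V → Option (Option ℕ)) → Bool → Prop
  | 0, f, _ => AllPlayed f
  | fuel + 1, f, true => AllPlayed f ∨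
      ∃ v c, BColLegal G K f v c ∧ MakerWinsB G K fuel (update f v (some (some c))) false
  | fuel + 1, f, false =>
      ((¬ ∃ v c, BColLegal G K f v c) ∧ AllPlayed f) ∨
      ((∃ v c, BColLegal G K f v c) ∧
        (∀ v c, BColLegal G K f v c →
          MakerWinsB G K fuel (update f v (some (some c))) true) ∧
        (∀ v, f v = none → MakerWinsB G K fuel (update f v (some none)) true))

/-- The game chromatic number with blanks `χ_gb(G)`: the least number of colours for
which Maker has a winning strategy in the vertex colouring game with blanks. -/
noncomputable def chiGb (G : SimpleGraph V) : ℕ :=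
  sInf {k | MakerWinsB G (Finset.range k) (Fintype.card V) (fun _ => none) true}

/-! ### The game with blanks, with classes marked for blanks.

The extra datum is the finite set `ds` of currently marked classes.  Maker may also
play blanks at unplayed vertices of marked classes; the game does not end while some
vertex of a marked class is unplayed; and whenever Breaker plays a blank at `v` he may
additionally remove one marked class not containing `v`. -/

/-- `v` belongs to some class marked for blanks. -/
def InMarked (ds : Finset (Finset V)) (v : V) : Prop := ∃ d ∈ ds, v ∈ d

/-- The game has ended: no colour move is available and no vertex of a class marked
for blanks is left unplayed. -/
def MEnded (G : SimpleGraph V) (K : Finset ℕ) (f : V → Option (Option ℕ))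
    (ds : Finset (Finset V)) : Prop :=
  (¬ ∃ v c, BColLegal G K f v c) ∧ ∀ v, InMarked ds v → f v ≠ none

/-- Maker wins the vertex colouring game with blanks, with the classes `ds` marked
for blanks, from the given position. -/
def MakerWinsM (G : SimpleGraph V) (K : Finset ℕ) :
    ℕ → (V → Option (Option ℕ)) → Finset (Finset V) → Bool → Prop
  | 0, f, _, _ => AllPlayed f
  | fuel + 1, f, ds, true =>
      (MEnded G K f ds ∧ AllPlayed f) ∨
      (¬ MEnded G K f ds ∧
        ((∃ v c, BColLegal G K f v c ∧
            MakerWinsM G K fuel (update f v (some (some c))) ds false) ∨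
         (∃ v, f v = none ∧ InMarked ds v ∧
            MakerWinsM G K fuel (update f v (some none)) ds false)))
  | fuel + 1, f, ds, false =>
      (MEnded G K f ds ∧ AllPlayed f) ∨
      (¬ MEnded G K f ds ∧
        (∀ v c, BColLegal G K f v c →
          MakerWinsM G K fuel (update f v (some (some c))) ds true) ∧
        (∀ v, f v = none →
          MakerWinsM G K fuel (update f v (some none)) ds true ∧
          ∀ d ∈ ds, v ∉ d →
            MakerWinsM G K fuel (update f v (some none)) (ds.erase d) true))

/-- `χ_gb(G; D₁,…,Dₛ)`: the least number of colours for which Maker has a winning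
strategy in the vertex colouring game with blanks with the classes in `ds` marked for
blanks. -/
noncomputable def chiGbM (G : SimpleGraph V) (ds : Finset (Finset V)) : ℕ :=
  sInf {k | MakerWinsM G (Finset.range k) (Fintype.card V) (fun _ => none) ds true}

/-! ### Move sequences, for conditioning the game on an initial sequence of plays. -/

/-- A move in the game with blanks: a colour at a vertex, or a blank at a vertex
together with an optional marked class which Breaker removes. -/
inductive BMove (W : Type*) where
  | color (v : W) (c : ℕ)
  | blank (v : W) (removed : Option (Finset W))
  deriving DecidableEq

/-- The vertex at which a move is made. -/
def BMove.vertex {W : Type*} : BMove W → W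
  | .color v _ => v
  | .blank v _ => v

/-- The effect of a single move on a position. -/
def bStep (st : (V → Option (Option ℕ)) × Finset (Finset V)) :
    BMove V → (V → Option (Option ℕ)) × Finset (Finset V)
  | .color v c => (update st.1 v (some (some c)), st.2)
  | .blank v none => (update st.1 v (some none), st.2)
  | .blank v (some d) => (update st.1 v (some none), st.2.erase d)

/-- The position reached after the sequence `P` of moves. -/
def bRun (st : (V → Option (Option ℕ)) × Finset (Finset V)) (P : List (BMove V)) :
    (V → Option (Option ℕ)) × Finset (Finset V) :=
  P.foldl bStep st

/-- `P` is a legal sequence of moves from the given position in the game with blanks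
with marked classes (the `Bool` is the player to move, `true` = Maker). -/
def LegalSeqM (G : SimpleGraph V) (K : Finset ℕ) :
    (V → Option (Option ℕ)) → Finset (Finset V) → Bool → List (BMove V) → Prop
  | _, _, _, [] => True
  | f, ds, true, BMove.color v c :: rest =>
      ¬ MEnded G K f ds ∧ BColLegal G K f v c ∧
        LegalSeqM G K (update f v (some (some c))) ds false rest
  | f, ds, true, BMove.blank v r :: rest =>
      ¬ MEnded G K f ds ∧ f v = none ∧ InMarked ds v ∧ r = none ∧
        LegalSeqM G K (update f v (some none)) ds false rest
  | f, ds, false, BMove.color v c :: rest =>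
      ¬ MEnded G K f ds ∧ BColLegal G K f v c ∧
        LegalSeqM G K (update f v (some (some c))) ds true rest
  | f, ds, false, BMove.blank v none :: rest =>
      ¬ MEnded G K f ds ∧ f v = none ∧
        LegalSeqM G K (update f v (some none)) ds true rest
  | f, ds, false, BMove.blank v (some d) :: rest =>
      ¬ MEnded G K f ds ∧ f v = none ∧ d ∈ ds ∧ v ∉ d ∧
        LegalSeqM G K (update f v (some none)) (ds.erase d) true rest

/-- `χ_gb(G; ds | P)`: the least number of colours for which Maker has a winning
strategy in the vertex colouring game with blanks with the classes `ds` marked for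
blanks, conditioned on the game starting with the sequence `P` of moves. -/
noncomputable def chiGbMCond (G : SimpleGraph V) (ds : Finset (Finset V))
    (P : List (BMove V)) : ℕ :=
  sInf {n | ∃ K : Finset ℕ, K.card = n ∧
    LegalSeqM G K (fun _ => none) ds true P ∧
    MakerWinsM G K (Fintype.card V - P.length) (bRun (fun _ => none, ds) P).1
      (bRun (fun _ => none, ds) P).2 (decide (P.length % 2 = 0))}

/-! ### The marking game. -/

/-- `v` may legally be marked: it is unmarked and has at most `k - 1` marked
neighbours. -/
def MarkLegal (G : SimpleGraph V) (k : ℕ) (M : Set V) (v : V) : Prop :=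
  v ∉ M ∧ (M ∩ {u | G.Adj v u}).ncard < k

/-- Maker wins the marking game from the given position. -/
def MakerWinsMark (G : SimpleGraph V) (k : ℕ) : ℕ → Set V → Bool → Prop
  | 0, M, _ => ∀ v, v ∈ M
  | fuel + 1, M, true => (∀ v, v ∈ M) ∨
      ∃ v, MarkLegal G k M v ∧ MakerWinsMark G k fuel (insert v M) false
  | fuel + 1, M, false => (∀ v, v ∈ M) ∨
      ((∃ v, MarkLegal G k M v) ∧
        ∀ v, MarkLegal G k M v → MakerWinsMark G k fuel (insert v M) true)

/-- The marking number (game colouring number) `m(G)`: the least `k` for which Maker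
has a winning strategy in the marking game. -/
noncomputable def markingNumber (G : SimpleGraph V) : ℕ :=
  sInf {k | MakerWinsMark G k (Fintype.card V) ∅ true}


set_option linter.unusedSectionVars false

section Helpers
variable {G : SimpleGraph V} {K : Finset ℕ} {f : V → Option (Option ℕ)}
  {ds : Finset (Finset V)} {v : V} {c : ℕ} {n : ℕ}

lemma notMEnded_of_colour (h : BColLegal G K f v c) : ¬ MEnded G K f ds :=
  fun he => he.1 ⟨v, c, h⟩

lemma notMEnded_of_blank (h1 : f v = none) (h2 : InMarked ds v) : ¬ MEnded G K f ds :=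
  fun he => he.2 v h2 h1

lemma maker_colour (h : BColLegal G K f v c)
    (hw : MakerWinsM G K n (update f v (some (some c))) ds false) :
    MakerWinsM G K (n+1) f ds true :=
  Or.inr ⟨notMEnded_of_colour h, Or.inl ⟨v, c, h, hw⟩⟩

lemma maker_blank (h1 : f v = none) (h2 : InMarked ds v)
    (hw : MakerWinsM G K n (update f v (some none)) ds false) :
    MakerWinsM G K (n+1) f ds true :=
  Or.inr ⟨notMEnded_of_blank h1 h2, Or.inr ⟨v, h1, h2, hw⟩⟩

lemma breaker_step (hne : ¬ MEnded G K f ds)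
    (hcol : ∀ v c, BColLegal G K f v c →
      MakerWinsM G K n (update f v (some (some c))) ds true)
    (hbl : ∀ v, f v = none → ∀ ds',
      (ds' = ds ∨ ∃ d ∈ ds, v ∉ d ∧ ds' = ds.erase d) →
      MakerWinsM G K n (update f v (some none)) ds' true) :
    MakerWinsM G K (n+1) f ds false :=
  Or.inr ⟨hne, hcol, fun v hv =>
    ⟨hbl v hv _ (Or.inl rfl), fun d hd hvd => hbl v hv _ (Or.inr ⟨d, hd, hvd, rfl⟩)⟩⟩

lemma finish {w : V} (hw : f w = none) (hall : ∀ v, v ≠ w → f v ≠ none)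
    (h : (∃ c, BColLegal G K f w c) ∨ InMarked ds w) :
    MakerWinsM G K 1 f ds true := by
  have hAP : ∀ o : Option ℕ, AllPlayed (update f w (some o)) := by
    intro o u
    rcases eq_or_ne u w with rfl | h
    · simp
    · simpa [Function.update_of_ne h] using hall u h
  rcases h with ⟨c, hc⟩ | hm
  · exact Or.inr ⟨notMEnded_of_colour hc, Or.inl ⟨w, c, hc, hAP _⟩⟩
  · exact Or.inr ⟨notMEnded_of_blank hw hm, Or.inr ⟨w, hw, hm, hAP _⟩⟩

lemma third {x y z : V} (hxy : x ≠ y) (hxz : x ≠ z) (hyz : y ≠ z)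
    (hcov : ∀ v : V, v = x ∨ v = y ∨ v = z) {a b : V} (hab : a ≠ b) :
    ∃ w, w ≠ a ∧ w ≠ b ∧ ∀ v, v = a ∨ v = b ∨ v = w := by
  rcases hcov a with rfl|rfl|rfl <;> rcases hcov b with rfl|rfl|rfl <;>
    first
    | exact absurd rfl hab
    | exact ⟨x, by tauto, by tauto, fun v => by rcases hcov v with rfl|rfl|rfl <;> tauto⟩
    | exact ⟨y, by tauto, by tauto, fun v => by rcases hcov v with rfl|rfl|rfl <;> tauto⟩
    | exact ⟨z, by tauto, by tauto, fun v => by rcases hcov v with rfl|rfl|rfl <;> tauto⟩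

end Helpers


/-- If `G` has order 3, `C₁,…,C_p` is a partition of `V(G)` into `p`
disjoint independent sets, and `D₁,…,Dₛ` are some `s ≥ 1` of these sets, then
`χ_gb(G; D₁,…,Dₛ) ≤ p − 1`. -/
theorem chiGbM_le_of_order_three {V : Type*} [Fintype V] [DecidableEq V]
    (G : SimpleGraph V) (hn : Fintype.card V = 3)
    {p : ℕ} (C : Fin p → Finset V)
    (hCne : ∀ i, (C i).Nonempty)
    (hCind : ∀ i, IsIndepF G (C i))
    (hCdisj : ∀ i j, i ≠ j → Disjoint (C i) (C j))
    (hCcover : ∀ v : V, ∃ i, v ∈ C i)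
    {s : ℕ} (hs : 1 ≤ s) (ι : Fin s → Fin p) (hι : Function.Injective ι) :
    chiGbM G (Finset.image (fun i => C (ι i)) Finset.univ) ≤ p - 1 := by
  classical
  set ds := Finset.image (fun i => C (ι i)) Finset.univ with hdsdef
  -- basic numerology
  have hp1 : 1 ≤ p := (ι ⟨0, hs⟩).pos
  have hbu : Finset.univ.biUnion C = (Finset.univ : Finset V) := by
    ext v; simpa using hCcover v
  have hsum : ∑ i, (C i).card = 3 := by
    have h1 : (Finset.univ.biUnion C).card = ∑ i, (C i).card :=
      Finset.card_biUnion (fun i _ j _ hij => hCdisj i j hij)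
    rw [hbu, Finset.card_univ, hn] at h1
    exact h1.symm
  have hp3 : p ≤ 3 := by
    calc p = ∑ _i : Fin p, 1 := by simp
    _ ≤ ∑ i, (C i).card := Finset.sum_le_sum (fun i _ => Finset.card_pos.2 (hCne i))
    _ = 3 := hsum
  -- three named vertices
  obtain ⟨x, y, z, hxy, hxz, hyz, huniv⟩ :=
    Finset.card_eq_three.1 (show (Finset.univ : Finset V).card = 3 by
      rw [Finset.card_univ, hn])
  have hcov3 : ∀ v : V, v = x ∨ v = y ∨ v = z := by
    intro v
    have := Finset.mem_univ v
    rw [huniv] at this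
    simpa using this
  have hdse : C (ι ⟨0, hs⟩) ∈ ds :=
    Finset.mem_image.2 ⟨⟨0, hs⟩, Finset.mem_univ _, rfl⟩
  have hmem : MakerWinsM G (Finset.range (p - 1)) (Fintype.card V)
      (fun _ : V => none) ds true := by
    rw [hn]
    obtain rfl | rfl | rfl : p = 1 ∨ p = 2 ∨ p = 3 := by omega
    -- ===================== p = 1 =====================
    · have noCol : ∀ (f : V → Option (Option ℕ)) v c,
          ¬ BColLegal G (Finset.range (1 - 1)) f v c := by
        intro f v c h
        simpa using h.1
      have hMark : ∀ v : V, InMarked ds v := by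
        intro v
        obtain ⟨i, hi⟩ := hCcover v
        exact ⟨C (ι ⟨0, hs⟩), hdse, by rw [Subsingleton.elim (ι ⟨0, hs⟩) i]; exact hi⟩
      refine maker_blank (v := x) rfl (hMark x) (breaker_step ?_ ?_ ?_)
      · exact notMEnded_of_blank (v := y)
          (by simp [Function.update_apply, hxy.symm]) (hMark y)
      · intro v c h
        exact absurd h (noCol _ _ _)
      · intro v hv ds' hds'
        have hvx : v ≠ x := by rintro rfl; simpa using hv
        have hMark' : ∀ w, InMarked ds' w := by
          rcases hds' with rfl | ⟨d, hd, hvd, rfl⟩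
          · exact hMark
          · exfalso
            obtain ⟨i, -, rfl⟩ := Finset.mem_image.1 hd
            obtain ⟨j, hj⟩ := hCcover v
            exact hvd (by rw [Subsingleton.elim (ι i) j]; exact hj)
        obtain ⟨w, hwx, hwv, hcw⟩ := third hxy hxz hyz hcov3 hvx.symm
        refine finish (w := w) (by simp [Function.update_apply, hwv, hwx]) ?_
          (Or.inr (hMark' w))
        intro u hu
        rcases hcw u with rfl | rfl | rfl
        · simp [Function.update_apply, hvx.symm]
        · simp [Function.update_apply]
        · exact absurd rfl hu
    -- ===================== p = 2 =====================
    · have hfin2 : ∀ j k : Fin 2, j ≠ k → ∀ i, i = j ∨ i = k := by decide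
      obtain ⟨iA, iB, hAB, hA2, hB1⟩ :
          ∃ iA iB : Fin 2, iA ≠ iB ∧ (C iA).card = 2 ∧ (C iB).card = 1 := by
        have c0 := Finset.card_pos.2 (hCne 0)
        have c1 := Finset.card_pos.2 (hCne 1)
        have hsum2 : (C 0).card + (C 1).card = 3 := by
          simpa [Fin.sum_univ_two] using hsum
        rcases Nat.lt_or_ge (C 0).card 2 with h | h
        · exact ⟨1, 0, by decide, by omega, by omega⟩
        · exact ⟨0, 1, by decide, by omega, by omega⟩
      obtain ⟨a, a', haa', hAeq⟩ := Finset.card_eq_two.1 hA2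
      obtain ⟨b, hBeq⟩ := Finset.card_eq_one.1 hB1
      have haA : a ∈ C iA := by rw [hAeq]; simp
      have ha'A : a' ∈ C iA := by rw [hAeq]; simp
      have hbB : b ∈ C iB := by rw [hBeq]; simp
      have hbA : b ∉ C iA := Finset.disjoint_right.1 (hCdisj iA iB hAB) hbB
      have hab : a ≠ b := fun h => hbA (h ▸ haA)
      have ha'b : a' ≠ b := fun h => hbA (h ▸ ha'A)
      have hAdj : ¬ G.Adj a a' := hCind iA a haA a' ha'A
      have hAdj' : ¬ G.Adj a' a := hCind iA a' ha'A a haA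
      have hcov' : ∀ v : V, v = a ∨ v = a' ∨ v = b := by
        intro v
        obtain ⟨i, hi⟩ := hCcover v
        rcases hfin2 iA iB hAB i with rfl | rfl
        · rw [hAeq] at hi
          rcases Finset.mem_insert.1 hi with rfl | h
          · exact Or.inl rfl
          · exact Or.inr (Or.inl (Finset.mem_singleton.1 h))
        · rw [hBeq] at hi
          exact Or.inr (Or.inr (Finset.mem_singleton.1 hi))
      have hdsC : ∀ d ∈ ds, d = C iA ∨ d = C iB := by
        intro d hd
        obtain ⟨i, -, rfl⟩ := Finset.mem_image.1 hd
        rcases hfin2 iA iB hAB (ι i) with h | h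
        · exact Or.inl (by rw [h])
        · exact Or.inr (by rw [h])
      by_cases hAds : C iA ∈ ds
      -- ---- subcase: the 2-element class is marked: Maker colours b with 0
      · have fin1 : ∀ (o : Option ℕ) (v w : V), v ≠ b → w ≠ b → w ≠ v →
            w ∈ C iA → (∀ u : V, u = v ∨ u = w ∨ u = b) →
            ∀ ds' : Finset (Finset V), C iA ∈ ds' →
            MakerWinsM G (Finset.range (2 - 1)) 1
              (update (update (fun _ : V => none) b (some (some 0))) v (some o))
              ds' true := by
          intro o v w hvb hwb hwv hwA hcv ds' hA'
          refine finish (w := w) (by simp [Function.update_apply, hwv, hwb]) ?_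
            (Or.inr ⟨C iA, hA', hwA⟩)
          intro u hu
          rcases hcv u with rfl | rfl | rfl
          · simp [Function.update_apply]
          · exact absurd rfl hu
          · simp [Function.update_apply, hvb.symm]
        refine maker_colour (v := b) (c := 0)
          ⟨by simp, rfl, fun u _ => by simp⟩ (breaker_step ?_ ?_ ?_)
        · exact notMEnded_of_blank (v := a)
            (by simp [Function.update_apply, hab]) ⟨C iA, hAds, haA⟩
        · intro v c h
          have hvb : v ≠ b := by rintro rfl; simpa using h.2.1
          rcases hcov' v with h' | h' | h'
          · exact fin1 _ v a' hvb ha'b (by rw [h']; exact haa'.symm) ha'A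
              (fun u => by rw [h']; exact hcov' u) ds hAds
          · exact fin1 _ v a hvb hab (by rw [h']; exact haa') haA
              (fun u => by rw [h']; rcases hcov' u with h''|h''|h'' <;> tauto) ds hAds
          · exact absurd h' hvb
        · intro v hv ds' hds'
          have hvb : v ≠ b := by rintro rfl; simpa using hv
          have hvA : v ∈ C iA := by
            rcases hcov' v with h' | h' | h'
            exacts [h' ▸ haA, h' ▸ ha'A, absurd h' hvb]
          have hA' : C iA ∈ ds' := by
            rcases hds' with rfl | ⟨d, hd, hvd, rfl⟩
            · exact hAds
            · exact Finset.mem_erase.2 ⟨fun h => hvd (h ▸ hvA), hAds⟩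
          rcases hcov' v with h' | h' | h'
          · exact fin1 none v a' hvb ha'b (by rw [h']; exact haa'.symm) ha'A
              (fun u => by rw [h']; exact hcov' u) ds' hA'
          · exact fin1 none v a hvb hab (by rw [h']; exact haa') haA
              (fun u => by rw [h']; rcases hcov' u with h''|h''|h'' <;> tauto) ds' hA'
          · exact absurd h' hvb
      -- ---- subcase: only the singleton class is marked: Maker blanks b
      · have hBds : C iB ∈ ds := by
          rcases hdsC _ hdse with h | h
          · exact absurd (h ▸ hdse) hAds
          · exact h ▸ hdse
        have fin2 : ∀ (o : Option ℕ) (v w : V), v ≠ b → w ≠ b → w ≠ v →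
            ¬ G.Adj w v → (∀ u : V, u = v ∨ u = w ∨ u = b) →
            ∀ ds' : Finset (Finset V),
            MakerWinsM G (Finset.range (2 - 1)) 1
              (update (update (fun _ : V => none) b (some none)) v (some o))
              ds' true := by
          intro o v w hvb hwb hwv hnadj hcv ds'
          refine finish (w := w) (by simp [Function.update_apply, hwv, hwb]) ?_
            (Or.inl ⟨0, by simp, by simp [Function.update_apply, hwv, hwb], ?_⟩)
          · intro u hu
            rcases hcv u with rfl | rfl | rfl
            · simp [Function.update_apply]
            · exact absurd rfl hu
            · simp [Function.update_apply, hvb.symm]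
          · intro u hadj
            rcases hcv u with rfl | rfl | rfl
            · exact absurd hadj hnadj
            · exact absurd hadj (G.irrefl)
            · simp [Function.update_apply, hvb.symm]
        refine maker_blank (v := b) rfl ⟨C iB, hBds, hbB⟩ (breaker_step ?_ ?_ ?_)
        · refine notMEnded_of_colour (v := a) (c := 0)
            ⟨by simp, by simp [Function.update_apply, hab], fun u _ => ?_⟩
          by_cases h : u = b <;> simp [Function.update_apply, h]
        · intro v c h
          have hvb : v ≠ b := by rintro rfl; simpa using h.2.1
          rcases hcov' v with h' | h' | h'
          · exact fin2 _ v a' hvb ha'b (by rw [h']; exact haa'.symm)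
              (by rw [h']; exact hAdj')
              (fun u => by rw [h']; exact hcov' u) ds
          · exact fin2 _ v a hvb hab (by rw [h']; exact haa')
              (by rw [h']; exact hAdj)
              (fun u => by rw [h']; rcases hcov' u with h''|h''|h'' <;> tauto) ds
          · exact absurd h' hvb
        · intro v hv ds' _
          have hvb : v ≠ b := by rintro rfl; simpa using hv
          rcases hcov' v with h' | h' | h'
          · exact fin2 none v a' hvb ha'b (by rw [h']; exact haa'.symm)
              (by rw [h']; exact hAdj')
              (fun u => by rw [h']; exact hcov' u) ds'
          · exact fin2 none v a hvb hab (by rw [h']; exact haa')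
              (by rw [h']; exact hAdj)
              (fun u => by rw [h']; rcases hcov' u with h''|h''|h'' <;> tauto) ds'
          · exact absurd h' hvb
    -- ===================== p = 3 =====================
    · obtain ⟨d0, hd0⟩ := hCne (ι ⟨0, hs⟩)
      have fin3 : ∀ (o : Option ℕ) (c' : ℕ), c' < 2 → o ≠ some c' →
          ∀ (v w : V), v ≠ d0 → w ≠ d0 → w ≠ v →
          (∀ u : V, u = v ∨ u = w ∨ u = d0) →
          ∀ ds' : Finset (Finset V),
          MakerWinsM G (Finset.range (3 - 1)) 1
            (update (update (fun _ : V => none) d0 (some none)) v (some o))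
            ds' true := by
        intro o c' hc' ho v w hvd hwd hwv hcv ds'
        refine finish (w := w) (by simp [Function.update_apply, hwv, hwd]) ?_
          (Or.inl ⟨c', Finset.mem_range.2 (by omega),
            by simp [Function.update_apply, hwv, hwd], ?_⟩)
        · intro u hu
          rcases hcv u with rfl | rfl | rfl
          · simp [Function.update_apply]
          · exact absurd rfl hu
          · simp [Function.update_apply, hvd.symm]
        · intro u _
          rcases hcv u with rfl | rfl | rfl
          · simpa [Function.update_apply] using ho
          · simp [Function.update_apply, hwv, hwd]
          · simp [Function.update_apply, hvd.symm]
      refine maker_blank (v := d0) rfl ⟨C (ι ⟨0, hs⟩), hdse, hd0⟩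
        (breaker_step ?_ ?_ ?_)
      · have : Nontrivial V := Fintype.one_lt_card_iff_nontrivial.1 (by omega)
        obtain ⟨u, hu⟩ := exists_ne d0
        refine notMEnded_of_colour (v := u) (c := 0)
          ⟨by simp, by simp [Function.update_apply, hu], fun u' _ => ?_⟩
        by_cases h : u' = d0 <;> simp [Function.update_apply, h]
      · intro v c h
        have hc2 : c < 2 := by simpa using h.1
        have hvd : v ≠ d0 := by rintro rfl; simpa using h.2.1
        obtain ⟨w, hwv, hwd, hcw⟩ := third hxy hxz hyz hcov3 hvd
        exact fin3 (some c) (if c = 0 then 1 else 0) (by split <;> omega)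
          (by by_cases h' : c = 0 <;> simp [h'])
          v w hvd hwd hwv
          (fun u => by rcases hcw u with h'|h'|h' <;> tauto) ds
      · intro v hv ds' _
        have hvd : v ≠ d0 := by rintro rfl; simpa using hv
        obtain ⟨w, hwv, hwd, hcw⟩ := third hxy hxz hyz hcov3 hvd
        exact fin3 none 0 (by omega) (by simp) v w hvd hwd hwv
          (fun u => by rcases hcw u with h'|h'|h' <;> tauto) ds'
  exact Nat.sInf_le hmem

end GameCol
end

section
/- For any finite simple graph G of order n with 2 ≤ n ≤ 5, we have χ_gb(G) ≤ χ(G) + ⌊n/2⌋ − 1. -/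
open Function

namespace GameCol

variable {V : Type*} [Fintype V] [DecidableEq V]

/-! ### Auxiliary material for Statement 15 -/

section Aux

open Finset

variable {V : Type*} [Fintype V] [DecidableEq V]

/-- The entry of a position is an actual colour. -/
def isColEntry : Option (Option ℕ) → Bool
  | some (some _) => true
  | _ => false

/-- Number of unplayed vertices. -/
def nonesCount (f : V → Option (Option ℕ)) : ℕ :=
  (Finset.univ.filter (fun v => f v = none)).card

/-- Number of coloured vertices. -/
def colCount (f : V → Option (Option ℕ)) : ℕ :=
  (Finset.univ.filter (fun v => isColEntry (f v) = true)).card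

lemma nonesCount_update {f : V → Option (Option ℕ)} {v : V} (hv : f v = none)
    (x : Option ℕ) : nonesCount (update f v (some x)) + 1 = nonesCount f := by
  have h : (Finset.univ.filter (fun u => update f v (some x) u = none))
      = (Finset.univ.filter (fun u => f u = none)).erase v := by
    ext u
    by_cases h : u = v
    · subst h; simp [Function.update_apply]
    · simp [Function.update_apply, h]
  have hv' : v ∈ Finset.univ.filter (fun u => f u = none) := by simp [hv]
  have hpos : 0 < (Finset.univ.filter (fun u => f u = none)).card :=
    Finset.card_pos.mpr ⟨v, hv'⟩
  rw [nonesCount, nonesCount, h, Finset.card_erase_of_mem hv']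
  omega

lemma colCount_update_le (f : V → Option (Option ℕ)) (v : V) (x : Option ℕ) :
    colCount (update f v (some x)) ≤ colCount f + 1 := by
  have h : (Finset.univ.filter (fun u => isColEntry (update f v (some x) u) = true))
      ⊆ insert v (Finset.univ.filter (fun u => isColEntry (f u) = true)) := by
    intro u hu
    rcases Finset.mem_filter.mp hu with ⟨-, hu2⟩
    by_cases h : u = v
    · exact Finset.mem_insert.mpr (Or.inl h)
    · rw [Function.update_apply, if_neg h] at hu2
      exact Finset.mem_insert.mpr (Or.inr (Finset.mem_filter.mpr ⟨Finset.mem_univ _, hu2⟩))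
  calc colCount (update f v (some x)) ≤ _ := Finset.card_le_card h
    _ ≤ colCount f + 1 := Finset.card_insert_le _ _

lemma allPlayed_of_nonesCount {f : V → Option (Option ℕ)} (h : nonesCount f = 0) :
    AllPlayed f := by
  intro v hv
  have hv' : v ∈ Finset.univ.filter (fun u => f u = none) := by simp [hv]
  have hpos := Finset.card_pos.mpr ⟨v, hv'⟩
  rw [nonesCount] at h
  omega

lemma exists_none_of_not_allPlayed {f : V → Option (Option ℕ)} (h : ¬ AllPlayed f) :
    ∃ v, f v = none := by
  by_contra hc
  push_neg at hc
  exact h (fun v => hc v)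

/-- If fewer than `k` neighbours of the unplayed vertex `v` are coloured, then some
colour of the palette `range k` is legal at `v`. -/
lemma exists_legal (G : SimpleGraph V) [DecidableRel G.Adj] {k : ℕ}
    {f : V → Option (Option ℕ)} {v : V} (hv : f v = none)
    (h : ((G.neighborFinset v).filter (fun u => isColEntry (f u) = true)).card < k) :
    ∃ c, BColLegal G (Finset.range k) f v c := by
  classical
  set s := (G.neighborFinset v).filter (fun u => isColEntry (f u) = true) with hs
  set t := s.image (fun u => ((f u).getD none).getD 0) with ht
  have htc : t.card < (Finset.range k).card := by
    rw [Finset.card_range]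
    exact lt_of_le_of_lt Finset.card_image_le h
  have hns : ¬ (Finset.range k ⊆ t) := by
    intro hsub
    exact absurd (Finset.card_le_card hsub) (by omega)
  obtain ⟨c, hc, hcn⟩ := Finset.not_subset.mp hns
  refine ⟨c, hc, hv, ?_⟩
  intro u hadj heq
  apply hcn
  rw [ht, Finset.mem_image]
  refine ⟨u, ?_, by rw [heq]; rfl⟩
  rw [hs, Finset.mem_filter]
  exact ⟨(G.mem_neighborFinset v u).mpr hadj, by rw [heq]; rfl⟩

lemma coloredNbrs_le_degree (G : SimpleGraph V) [DecidableRel G.Adj]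
    (f : V → Option (Option ℕ)) (v : V) :
    ((G.neighborFinset v).filter (fun u => isColEntry (f u) = true)).card ≤ G.degree v := by
  rw [← SimpleGraph.card_neighborFinset_eq_degree]
  exact Finset.card_filter_le _ _

lemma coloredNbrs_le_colCount (G : SimpleGraph V) [DecidableRel G.Adj]
    (f : V → Option (Option ℕ)) (v : V) :
    ((G.neighborFinset v).filter (fun u => isColEntry (f u) = true)).card ≤ colCount f := by
  apply Finset.card_le_card
  intro u hu
  rcases Finset.mem_filter.mp hu with ⟨-, hu2⟩
  exact Finset.mem_filter.mpr ⟨Finset.mem_univ _, hu2⟩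

/-- If every unplayed vertex has degree `< k`, Maker wins no matter what. -/
lemma winsT (G : SimpleGraph V) [DecidableRel G.Adj] {k : ℕ} :
    ∀ (fuel : ℕ) (f : V → Option (Option ℕ)) (b : Bool),
      nonesCount f ≤ fuel → (∀ v, f v = none → G.degree v < k) →
      MakerWinsB G (Finset.range k) fuel f b := by
  intro fuel
  induction fuel with
  | zero =>
      intro f b hn _
      cases b <;> exact allPlayed_of_nonesCount (by omega)
  | succ p ih =>
      intro f b hn hdeg
      by_cases hAP : AllPlayed f
      · cases b
        · exact Or.inl ⟨fun ⟨v, c, _, hv, _⟩ => hAP v hv, hAP⟩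
        · exact Or.inl hAP
      · obtain ⟨v, hv⟩ := exists_none_of_not_allPlayed hAP
        have hleg : ∃ c, BColLegal G (Finset.range k) f v c :=
          exists_legal G hv (lt_of_le_of_lt (coloredNbrs_le_degree G f v) (hdeg v hv))
        obtain ⟨c, hc⟩ := hleg
        have hnupd : ∀ (x : Option ℕ), nonesCount (update f v (some x)) ≤ p := by
          intro x
          have := nonesCount_update hv x
          omega
        have hdupd : ∀ (w : V) (x : Option ℕ) (u : V),
            update f w (some x) u = none → G.degree u < k := by
          intro w x u hu
          by_cases h : u = w
          · subst h; rw [Function.update_self] at hu; exact absurd hu (by simp)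
          · rw [Function.update_apply, if_neg h] at hu; exact hdeg u hu
        cases b
        · -- Breaker to move
          refine Or.inr ⟨⟨v, c, hc⟩, ?_, ?_⟩
          · intro w c' hl
            have hw : f w = none := hl.2.1
            have := nonesCount_update hw (some c')
            exact ih _ true (by omega) (hdupd w (some c'))
          · intro w hw
            have := nonesCount_update hw none
            exact ih _ true (by omega) (hdupd w none)
        · -- Maker to move
          exact Or.inr ⟨v, c, hc, ih _ false (hnupd (some c)) (hdupd v (some c))⟩

/-- Maker to move; `t` still unplayed, at most two coloured vertices, all other
unplayed vertices have degree `< k`, `3 ≤ k`: Maker wins by colouring `t` now. -/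
lemma winsM (G : SimpleGraph V) [DecidableRel G.Adj] {k : ℕ} (hk : 3 ≤ k) (t : V) :
    ∀ (fuel : ℕ) (f : V → Option (Option ℕ)),
      nonesCount f ≤ fuel → f t = none →
      (∀ v, f v = none → v ≠ t → G.degree v < k) →
      colCount f ≤ 2 →
      MakerWinsB G (Finset.range k) fuel f true := by
  intro fuel f hn ht hdeg hcol
  have htpos : 0 < nonesCount f :=
    Finset.card_pos.mpr ⟨t, by simp [ht]⟩
  obtain ⟨p, rfl⟩ : ∃ p, fuel = p + 1 := ⟨fuel - 1, by omega⟩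
  have hleg : ∃ c, BColLegal G (Finset.range k) f t c :=
    exists_legal G ht (lt_of_le_of_lt (le_trans (coloredNbrs_le_colCount G f t) hcol) hk)
  obtain ⟨c, hc⟩ := hleg
  refine Or.inr ⟨t, c, hc, ?_⟩
  have := nonesCount_update ht (some c)
  refine winsT G p _ false (by omega) ?_
  intro u hu
  by_cases h : u = t
  · subst h; rw [Function.update_self] at hu; exact absurd hu (by simp)
  · rw [Function.update_apply, if_neg h] at hu; exact hdeg u hu h

/-- Breaker to move; `t` still unplayed, at most one coloured vertex, all other
unplayed vertices have degree `< k`, `3 ≤ k`: Maker wins. -/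
lemma winsB (G : SimpleGraph V) [DecidableRel G.Adj] {k : ℕ} (hk : 3 ≤ k) (t : V) :
    ∀ (fuel : ℕ) (f : V → Option (Option ℕ)),
      nonesCount f ≤ fuel → f t = none →
      (∀ v, f v = none → v ≠ t → G.degree v < k) →
      colCount f ≤ 1 →
      MakerWinsB G (Finset.range k) fuel f false := by
  intro fuel f hn ht hdeg hcol
  have htpos : 0 < nonesCount f :=
    Finset.card_pos.mpr ⟨t, by simp [ht]⟩
  obtain ⟨p, rfl⟩ : ∃ p, fuel = p + 1 := ⟨fuel - 1, by omega⟩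
  have hleg : ∃ c, BColLegal G (Finset.range k) f t c :=
    exists_legal G ht
      (lt_of_le_of_lt (le_trans (coloredNbrs_le_colCount G f t) hcol) (by omega))
  obtain ⟨c0, hc0⟩ := hleg
  have key : ∀ (v : V) (x : Option ℕ), f v = none →
      MakerWinsB G (Finset.range k) p (update f v (some x)) true := by
    intro v x hv
    have hnupd := nonesCount_update hv x
    have hdupd : ∀ u, update f v (some x) u = none → u ≠ t → G.degree u < k := by
      intro u hu hut
      by_cases h : u = v
      · subst h; rw [Function.update_self] at hu; exact absurd hu (by simp)
      · rw [Function.update_apply, if_neg h] at hu; exact hdeg u hu hut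
    by_cases hvt : v = t
    · subst hvt
      refine winsT G p _ true (by omega) ?_
      intro u hu
      by_cases h : u = v
      · subst h; rw [Function.update_self] at hu; exact absurd hu (by simp)
      · rw [Function.update_apply, if_neg h] at hu
        exact hdeg u hu h
    · refine winsM G hk t p _ (by omega) ?_ hdupd ?_
      · rw [Function.update_apply, if_neg (fun h => hvt h.symm)]; exact ht
      · exact le_trans (colCount_update_le f v x) (by omega)
  refine Or.inr ⟨⟨t, c0, hc0⟩, ?_, ?_⟩
  · intro v c hl
    exact key v (some c) hl.2.1
  · intro v hv
    exact key v none hv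

/-- Maker to move with the whole board unplayed; if at most the two vertices `s`,`t`
can have degree `≥ k`, and `3 ≤ k`, Maker wins: colour `s`, then `t`. -/
lemma wins2 (G : SimpleGraph V) [DecidableRel G.Adj] {k : ℕ} (hk : 3 ≤ k)
    (s t : V) (hst : s ≠ t) (fuel : ℕ) (f : V → Option (Option ℕ))
    (hn : nonesCount f ≤ fuel) (hs : f s = none) (ht : f t = none)
    (hcol : colCount f = 0)
    (hdeg : ∀ v, f v = none → v ≠ s → v ≠ t → G.degree v < k) :
    MakerWinsB G (Finset.range k) fuel f true := by
  have hspos : 0 < nonesCount f :=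
    Finset.card_pos.mpr ⟨s, by simp [hs]⟩
  obtain ⟨p, rfl⟩ : ∃ p, fuel = p + 1 := ⟨fuel - 1, by omega⟩
  have hleg : ∃ c, BColLegal G (Finset.range k) f s c :=
    exists_legal G hs
      (lt_of_le_of_lt (le_trans (coloredNbrs_le_colCount G f s) (le_of_eq hcol)) (by omega))
  obtain ⟨c, hc⟩ := hleg
  refine Or.inr ⟨s, c, hc, ?_⟩
  have hnupd := nonesCount_update hs (some c)
  refine winsB G hk t p _ (by omega) ?_ ?_ ?_
  · rw [Function.update_apply, if_neg (fun h => hst h.symm)]; exact ht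
  · intro u hu hut
    by_cases h : u = s
    · subst h; rw [Function.update_self] at hu; exact absurd hu (by simp)
    · rw [Function.update_apply, if_neg h] at hu
      exact hdeg u hu h hut
  · exact le_trans (colCount_update_le f s (some c)) (by omega)

/-- Maker to move with the whole board unplayed; if only `s` can have degree `≥ k`,
and `1 ≤ k`, Maker wins: colour `s` first. -/
lemma wins1 (G : SimpleGraph V) [DecidableRel G.Adj] {k : ℕ} (hk : 1 ≤ k)
    (s : V) (fuel : ℕ) (f : V → Option (Option ℕ))
    (hn : nonesCount f ≤ fuel) (hs : f s = none) (hcol : colCount f = 0)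
    (hdeg : ∀ v, f v = none → v ≠ s → G.degree v < k) :
    MakerWinsB G (Finset.range k) fuel f true := by
  have hspos : 0 < nonesCount f :=
    Finset.card_pos.mpr ⟨s, by simp [hs]⟩
  obtain ⟨p, rfl⟩ : ∃ p, fuel = p + 1 := ⟨fuel - 1, by omega⟩
  have hleg : ∃ c, BColLegal G (Finset.range k) f s c :=
    exists_legal G hs
      (lt_of_le_of_lt (le_trans (coloredNbrs_le_colCount G f s) (le_of_eq hcol)) (by omega))
  obtain ⟨c, hc⟩ := hleg
  refine Or.inr ⟨s, c, hc, ?_⟩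
  have hnupd := nonesCount_update hs (some c)
  refine winsT G p _ false (by omega) ?_
  intro u hu
  by_cases h : u = s
  · subst h; rw [Function.update_self] at hu; exact absurd hu (by simp)
  · rw [Function.update_apply, if_neg h] at hu
    exact hdeg u hu h

end Aux

section Comb

open Finset

variable {V : Type*} [Fintype V] [DecidableEq V]

private lemma fin1_absurd : ∀ a b : Fin 1, a ≠ b → False := by decide

private lemma fin2_absurd : ∀ a b c : Fin 2, a ≠ b → a ≠ c → b ≠ c → False := by decide

private lemma fin3_cases : ∀ a b c d : Fin 3,
    a = b ∨ a = c ∨ a = d ∨ b = c ∨ b = d ∨ c = d := by decide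

private lemma fin3_absurd (a b c d : Fin 3) (h1 : a ≠ b) (h2 : a ≠ c) (h3 : a ≠ d)
    (h4 : b ≠ c) (h5 : b ≠ d) (h6 : c ≠ d) : False := by
  rcases fin3_cases a b c d with h | h | h | h | h | h
  exacts [h1 h, h2 h, h3 h, h4 h, h5 h, h6 h]

private lemma fin2_eq : ∀ a b c : Fin 2, a ≠ c → b ≠ c → a = b := by decide

private lemma fin2_succ_ne : ∀ a : Fin 2, a + 1 ≠ a := by decide

lemma adj_of_degree_ge (G : SimpleGraph V) [DecidableRel G.Adj] {v : V}
    (h : Fintype.card V - 1 ≤ G.degree v) {w : V} (hw : w ≠ v) : G.Adj v w := by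
  have hsub : G.neighborFinset v ⊆ Finset.univ.erase v := by
    intro u hu
    exact Finset.mem_erase.mpr ⟨((G.mem_neighborFinset v u).mp hu).ne', Finset.mem_univ u⟩
  have hcard : (Finset.univ.erase v).card ≤ (G.neighborFinset v).card := by
    rw [Finset.card_erase_of_mem (Finset.mem_univ v), Finset.card_univ,
      SimpleGraph.card_neighborFinset_eq_degree]
    exact h
  have heq := Finset.eq_of_subset_of_card_le hsub hcard
  have : w ∈ G.neighborFinset v := by
    rw [heq]
    exact Finset.mem_erase.mpr ⟨hw, Finset.mem_univ w⟩
  exact (G.mem_neighborFinset v w).mp this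

lemma exists_adj_of_degree_pos (G : SimpleGraph V) [DecidableRel G.Adj] {v : V}
    (h : 1 ≤ G.degree v) : ∃ w, G.Adj v w := by
  have : (G.neighborFinset v).Nonempty := by
    rw [← Finset.card_pos, SimpleGraph.card_neighborFinset_eq_degree]
    omega
  obtain ⟨w, hw⟩ := this
  exact ⟨w, (G.mem_neighborFinset v w).mp hw⟩

lemma exists_not_mem_of_card_lt {A : Finset V} (h : A.card < Fintype.card V) :
    ∃ w, w ∉ A := by
  by_contra hc
  push_neg at hc
  have : (Finset.univ : Finset V) ⊆ A := fun w _ => hc w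
  have := Finset.card_le_card this
  rw [Finset.card_univ] at this
  omega

private lemma card_triple {s t u : V} (hst : s ≠ t) (hsu : s ≠ u) (htu : t ≠ u) :
    ({s, t, u} : Finset V).card = 3 := by
  rw [Finset.card_insert_of_notMem (by simp [hst, hsu]),
    Finset.card_insert_of_notMem (by simp [htu]), Finset.card_singleton]

/-- There cannot be three distinct vertices of degree `≥ χ + ⌊n/2⌋ - 1` when `n ≤ 5`. -/
lemma three_big_absurd (G : SimpleGraph V) [DecidableRel G.Adj] {m : ℕ}
    (C : G.Coloring (Fin m)) (hm1 : 1 ≤ m) (hc5 : Fintype.card V ≤ 5)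
    {s t u : V} (hst : s ≠ t) (hsu : s ≠ u) (htu : t ≠ u)
    (hs : m + Fintype.card V / 2 - 1 ≤ G.degree s)
    (ht : m + Fintype.card V / 2 - 1 ≤ G.degree t)
    (hu : m + Fintype.card V / 2 - 1 ≤ G.degree u) : False := by
  have hn3 : 3 ≤ Fintype.card V := by
    have h1 := card_triple hst hsu htu
    have h2 := Finset.card_le_univ ({s, t, u} : Finset V)
    omega
  have hds := G.degree_lt_card_verts s
  have hdt := G.degree_lt_card_verts t
  have hdu := G.degree_lt_card_verts u
  rcases (by omega : m = 1 ∨ 2 ≤ m) with hm | hm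
  · subst hm
    have : 1 ≤ G.degree s := by omega
    obtain ⟨w, hw⟩ := exists_adj_of_degree_pos G this
    exact fin1_absurd _ _ (C.valid hw)
  · rcases (by omega :
        (Fintype.card V = 3 ∧ m = 2) ∨ (Fintype.card V = 4 ∧ m = 2) ∨
        (Fintype.card V = 5 ∧ m = 2) ∨ (Fintype.card V = 5 ∧ m = 3)) with
      ⟨hcard, hm2⟩ | ⟨hcard, hm2⟩ | ⟨hcard, hm2⟩ | ⟨hcard, hm2⟩
    · -- n = 3, m = 2 : s, t, u pairwise dominating
      subst hm2
      have hast : G.Adj s t := adj_of_degree_ge G (by omega) hst.symm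
      have hasu : G.Adj s u := adj_of_degree_ge G (by omega) hsu.symm
      have hatu : G.Adj t u := adj_of_degree_ge G (by omega) htu.symm
      exact fin2_absurd _ _ _ (C.valid hast) (C.valid hasu) (C.valid hatu)
    · -- n = 4, m = 2
      subst hm2
      have hast : G.Adj s t := adj_of_degree_ge G (by omega) hst.symm
      have hasu : G.Adj s u := adj_of_degree_ge G (by omega) hsu.symm
      have hatu : G.Adj t u := adj_of_degree_ge G (by omega) htu.symm
      exact fin2_absurd _ _ _ (C.valid hast) (C.valid hasu) (C.valid hatu)
    · -- n = 5, m = 2 : colour-class counting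
      subst hm2
      have fib : ∀ v : V, 3 ≤ G.degree v → ∀ x : Fin 2, x ≠ C v →
          3 ≤ (Finset.univ.filter (fun w => C w = x)).card := by
        intro v hv x hx
        refine le_trans ?_ (Finset.card_le_card (?_ :
          G.neighborFinset v ⊆ Finset.univ.filter (fun w => C w = x)))
        · rw [SimpleGraph.card_neighborFinset_eq_degree]; exact hv
        · intro w hw
          refine Finset.mem_filter.mpr ⟨Finset.mem_univ _, ?_⟩
          exact fin2_eq _ _ _ (C.valid ((G.mem_neighborFinset v w).mp hw)).symm hx
      have key : ∀ x y : Fin 2, x ≠ y →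
          3 ≤ (Finset.univ.filter (fun w => C w = x)).card →
          3 ≤ (Finset.univ.filter (fun w => C w = y)).card → False := by
        intro x y hxy h1 h2
        have hdisj : Disjoint (Finset.univ.filter (fun w => C w = x))
            (Finset.univ.filter (fun w => C w = y)) := by
          rw [Finset.disjoint_left]
          intro a ha hb
          exact hxy ((Finset.mem_filter.mp ha).2 ▸ (Finset.mem_filter.mp hb).2 ▸ rfl)
        have hle := Finset.card_le_univ
          ((Finset.univ.filter (fun w => C w = x)) ∪ (Finset.univ.filter (fun w => C w = y)))
        rw [Finset.card_union_of_disjoint hdisj] at hle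
        omega
      by_cases hall : C s = C t ∧ C t = C u
      · have h1 : 3 ≤ (Finset.univ.filter (fun w => C w = C s)).card := by
          refine le_trans (le_of_eq (card_triple hst hsu htu).symm) (Finset.card_le_card ?_)
          intro w hw
          simp only [Finset.mem_insert, Finset.mem_singleton] at hw
          refine Finset.mem_filter.mpr ⟨Finset.mem_univ _, ?_⟩
          rcases hw with rfl | rfl | rfl
          · rfl
          · exact hall.1.symm
          · exact (hall.1.trans hall.2).symm
        have h2 := fib s (by omega) (C s + 1) (fin2_succ_ne _)
        exact key _ _ (fin2_succ_ne _) h2 h1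
      · have : C s ≠ C t ∨ C t ≠ C u := by tauto
        rcases this with h | h
        · exact key _ _ h (fib t (by omega) (C s) h) (fib s (by omega) (C t) h.symm)
        · exact key _ _ h (fib u (by omega) (C t) h) (fib t (by omega) (C u) h.symm)
    · -- n = 5, m = 3 : s, t, u dominate; a fourth vertex gives a K₄
      subst hm2
      obtain ⟨w, hw⟩ := exists_not_mem_of_card_lt
        (A := ({s, t, u} : Finset V)) (by rw [card_triple hst hsu htu]; omega)
      simp only [Finset.mem_insert, Finset.mem_singleton, not_or] at hw
      obtain ⟨hws, hwt, hwu⟩ := hw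
      have hast : G.Adj s t := adj_of_degree_ge G (by omega) hst.symm
      have hasu : G.Adj s u := adj_of_degree_ge G (by omega) hsu.symm
      have hasw : G.Adj s w := adj_of_degree_ge G (by omega) hws
      have hatu : G.Adj t u := adj_of_degree_ge G (by omega) htu.symm
      have hatw : G.Adj t w := adj_of_degree_ge G (by omega) hwt
      have hauw : G.Adj u w := adj_of_degree_ge G (by omega) hwu
      exact fin3_absurd _ _ _ _ (C.valid hast) (C.valid hasu) (C.valid hasw)
        (C.valid hatu) (C.valid hatw) (C.valid hauw)

/-- There cannot be two distinct vertices of degree `≥ χ + ⌊n/2⌋ - 1` when this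
quantity is at most `2` (and `2 ≤ n ≤ 5`). -/
lemma two_big_absurd (G : SimpleGraph V) [DecidableRel G.Adj] {m : ℕ}
    (C : G.Coloring (Fin m)) (hm1 : 1 ≤ m) (hc2 : 2 ≤ Fintype.card V)
    (hk2 : m + Fintype.card V / 2 - 1 ≤ 2)
    {s t : V} (hst : s ≠ t)
    (hs : m + Fintype.card V / 2 - 1 ≤ G.degree s)
    (ht : m + Fintype.card V / 2 - 1 ≤ G.degree t) : False := by
  have hds := G.degree_lt_card_verts s
  have hdt := G.degree_lt_card_verts t
  rcases (by omega : m = 1 ∨ 2 ≤ m) with hm | hm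
  · subst hm
    have : 1 ≤ G.degree s := by omega
    obtain ⟨w, hw⟩ := exists_adj_of_degree_pos G this
    exact fin1_absurd _ _ (C.valid hw)
  · have hm2 : m = 2 := by omega
    subst hm2
    have hcard : Fintype.card V = 3 := by omega
    obtain ⟨w, hw⟩ := exists_not_mem_of_card_lt (A := ({s, t} : Finset V))
      (by rw [Finset.card_insert_of_notMem (by simp [hst]), Finset.card_singleton]; omega)
    simp only [Finset.mem_insert, Finset.mem_singleton, not_or] at hw
    obtain ⟨hws, hwt⟩ := hw
    have hast : G.Adj s t := adj_of_degree_ge G (by omega) hst.symm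
    have hasw : G.Adj s w := adj_of_degree_ge G (by omega) hws
    have hatw : G.Adj t w := adj_of_degree_ge G (by omega) hwt
    exact fin2_absurd _ _ _ (C.valid hast) (C.valid hasw) (C.valid hatw)

end Comb

/-- For any finite simple graph `G` of order `n` with `2 ≤ n ≤ 5`,
`χ_gb(G) ≤ χ(G) + ⌊n/2⌋ − 1`. -/
theorem chiGb_le_of_small_order {V : Type*} [Fintype V] [DecidableEq V]
    (G : SimpleGraph V) (h2 : 2 ≤ Fintype.card V) (h5 : Fintype.card V ≤ 5) :
    chiGb G ≤ G.chromaticNumber.toNat + Fintype.card V / 2 - 1 := by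
  classical
  haveI : DecidableRel G.Adj := fun a b => Classical.dec _
  obtain ⟨C⟩ := G.colorable_chromaticNumber_of_fintype
  set m := G.chromaticNumber.toNat with hm
  set k := m + Fintype.card V / 2 - 1 with hk
  have hm1 : 1 ≤ m := by
    have hne : Nonempty V := Fintype.card_pos_iff.mp (by omega)
    obtain ⟨v⟩ := hne
    have := (C v).is_lt
    omega
  have hk1 : 1 ≤ k := by omega
  set S := Finset.univ.filter (fun v => k ≤ G.degree v) with hS
  have hmemS : ∀ v, v ∈ S ↔ k ≤ G.degree v := by intro v; simp [hS]
  have hS2 : S.card ≤ 2 := by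
    by_contra hc
    push_neg at hc
    obtain ⟨a, b, c, ha, hb, hcc, hab, hac, hbc⟩ := Finset.two_lt_card_iff.mp hc
    exact three_big_absurd G C hm1 h5 hab hac hbc
      ((hmemS a).mp ha) ((hmemS b).mp hb) ((hmemS c).mp hcc)
  have hwin : MakerWinsB G (Finset.range k) (Fintype.card V) (fun _ => none) true := by
    have hnones : nonesCount (fun _ : V => (none : Option (Option ℕ))) = Fintype.card V := by
      simp [nonesCount]
    have hcol : colCount (fun _ : V => (none : Option (Option ℕ))) = 0 := by
      simp [colCount, isColEntry]
    rcases (by omega : S.card = 0 ∨ S.card = 1 ∨ S.card = 2) with h | h | h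
    · have hdeg : ∀ v : V, G.degree v < k := by
        intro v
        by_contra hc
        push_neg at hc
        have hv : v ∈ S := (hmemS v).mpr hc
        rw [Finset.card_eq_zero.mp h] at hv
        exact absurd hv (Finset.notMem_empty v)
      exact winsT G _ _ true (le_of_eq hnones) (fun v _ => hdeg v)
    · obtain ⟨s, hsS⟩ := Finset.card_eq_one.mp h
      have hdeg : ∀ v, v ≠ s → G.degree v < k := by
        intro v hv
        by_contra hc; push_neg at hc
        have hvS : v ∈ S := (hmemS v).mpr hc
        rw [hsS] at hvS
        exact hv (Finset.mem_singleton.mp hvS)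
      exact wins1 G hk1 s _ _ (le_of_eq hnones) rfl hcol (fun v _ hv => hdeg v hv)
    · obtain ⟨s, t, hst, hsS⟩ := Finset.card_eq_two.mp h
      have hks : k ≤ G.degree s := (hmemS s).mp (by rw [hsS]; simp)
      have hkt : k ≤ G.degree t := (hmemS t).mp (by rw [hsS]; simp)
      have hk3 : 3 ≤ k := by
        by_contra hc
        push_neg at hc
        exact two_big_absurd G C hm1 h2 (by omega) hst hks hkt
      have hdeg : ∀ v, v ≠ s → v ≠ t → G.degree v < k := by
        intro v hv1 hv2
        by_contra hc; push_neg at hc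
        have hvS : v ∈ S := (hmemS v).mpr hc
        rw [hsS] at hvS
        rcases Finset.mem_insert.mp hvS with h' | h'
        · exact hv1 h'
        · exact hv2 (Finset.mem_singleton.mp h')
      exact wins2 G hk3 s t hst _ _ (le_of_eq hnones) rfl rfl hcol
        (fun v _ h1' h2' => hdeg v h1' h2')
  exact Nat.sInf_le hwin

end GameCol
end

section
/- For any constant ε > 0, there is some integer n and a finite simple graph G on n vertices for which m(G) − χ(G) > (1 − ε)·n. -/
open Function

namespace GameCol

variable {V : Type*} [Fintype V] [DecidableEq V]

/-- With `k = |V|` colours Maker trivially wins: every unmarked vertex is legal. -/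
lemma markLegal_of_not_mem (G : SimpleGraph V) {M : Set V} {v : V} (hv : v ∉ M) :
    MarkLegal G (Fintype.card V) M v := by
  refine ⟨hv, ?_⟩
  have hssub : M ∩ {u | G.Adj v u} ⊂ Set.univ := by
    rw [Set.ssubset_univ_iff]
    intro h
    have : v ∈ M ∩ {u | G.Adj v u} := h ▸ Set.mem_univ v
    exact hv this.1
  have := Set.ncard_lt_ncard hssub (Set.finite_univ)
  simpa [Set.ncard_univ] using this

lemma makerWinsMark_card (G : SimpleGraph V) :
    ∀ (fuel : ℕ) (M : Set V) (b : Bool),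
      Fintype.card V ≤ fuel + M.ncard →
      MakerWinsMark G (Fintype.card V) fuel M b := by
  intro fuel
  induction fuel with
  | zero =>
    intro M b h
    have hM : M = Set.univ := by
      apply Set.eq_of_subset_of_ncard_le (Set.subset_univ M)
      simpa [Set.ncard_univ] using h
    simp only [MakerWinsMark]
    intro v; rw [hM]; trivial
  | succ fuel ih =>
    intro M b h
    by_cases hM : M = Set.univ
    · cases b <;> simp only [MakerWinsMark] <;> exact Or.inl (fun v => hM ▸ Set.mem_univ v)
    · obtain ⟨v, hv⟩ := Set.ne_univ_iff_exists_notMem M |>.mp hM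
      have hins : ∀ w, w ∉ M → Fintype.card V ≤ fuel + (insert w M).ncard := by
        intro w hw
        rw [Set.ncard_insert_of_notMem hw (Set.toFinite M)]
        omega
      cases b with
      | true =>
        simp only [MakerWinsMark]
        exact Or.inr ⟨v, markLegal_of_not_mem G hv, ih _ false (hins v hv)⟩
      | false =>
        simp only [MakerWinsMark]
        exact Or.inr ⟨⟨v, markLegal_of_not_mem G hv⟩,
          fun w hw => ih _ true (hins w hw.1)⟩

/-- If the legal move at `v` completes the marking, then `k` exceeds the degree
lower bound `d`. -/
lemma lt_of_legal_last (G : SimpleGraph V) {k d : ℕ} {M : Set V} {v : V}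
    (hleg : MarkLegal G k M v) (hins : insert v M = Set.univ)
    (hd : d ≤ {u | G.Adj v u}.ncard) : d < k := by
  obtain ⟨hvM, hcard⟩ := hleg
  have hsub : {u | G.Adj v u} ⊆ M := by
    intro u hu
    have : u ∈ insert v M := hins ▸ Set.mem_univ u
    rcases this with h | h
    · exact absurd (h ▸ hu) (G.irrefl)
    · exact h
  have heq : M ∩ {u | G.Adj v u} = {u | G.Adj v u} :=
    Set.inter_eq_self_of_subset_right hsub
  rw [heq] at hcard
  omega

/-- In a graph of minimum degree `≥ d`, Maker can only win the marking game with
`k > d` colours (as long as some vertex is still unmarked). -/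
lemma degree_lt_of_makerWinsMark (G : SimpleGraph V) (d k : ℕ)
    (hdeg : ∀ v : V, d ≤ {u | G.Adj v u}.ncard) :
    ∀ (fuel : ℕ) (M : Set V) (b : Bool),
      MakerWinsMark G k fuel M b → M ≠ Set.univ → d < k := by
  intro fuel
  induction fuel with
  | zero =>
    intro M b h hM
    exact absurd (Set.eq_univ_iff_forall.mpr h) hM
  | succ fuel ih =>
    intro M b h hM
    cases b with
    | true =>
      simp only [MakerWinsMark] at h
      rcases h with h | ⟨v, hleg, hwin⟩
      · exact absurd (Set.eq_univ_iff_forall.mpr h) hM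
      · by_cases hins : insert v M = Set.univ
        · exact lt_of_legal_last G hleg hins (hdeg v)
        · exact ih _ false hwin hins
    | false =>
      simp only [MakerWinsMark] at h
      rcases h with h | ⟨⟨v, hleg⟩, hall⟩
      · exact absurd (Set.eq_univ_iff_forall.mpr h) hM
      · by_cases hins : insert v M = Set.univ
        · exact lt_of_legal_last G hleg hins (hdeg v)
        · exact ih _ true (hall v hleg) hins

/-- For any `ε > 0` there is a finite simple graph `G` on some `n`
vertices with `m(G) − χ(G) > (1 − ε)·n`. -/
theorem exists_graph_markingNumber_sub_chromatic_gt (ε : ℝ) (hε : 0 < ε) :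
    ∃ (n : ℕ) (G : SimpleGraph (Fin n)),
      (markingNumber G : ℝ) - (G.chromaticNumber.toNat : ℝ) > (1 - ε) * n := by
  set t : ℕ := ⌈2 / ε⌉₊ + 1 with ht_def
  have ht0 : 0 < t := Nat.succ_pos _
  have htε : (2 : ℝ) < ε * t := by
    have h1 : (2 : ℝ) / ε ≤ ⌈2 / ε⌉₊ := Nat.le_ceil _
    have h2 : ((⌈2 / ε⌉₊ : ℝ)) < t := by
      rw [ht_def]; push_cast; linarith
    have : (2 : ℝ) / ε < t := lt_of_le_of_lt h1 h2
    calc (2 : ℝ) = ε * (2 / ε) := by field_simp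
    _ < ε * t := by exact mul_lt_mul_of_pos_left this hε
  set n : ℕ := t * t with hn_def
  have hn0 : 0 < n := Nat.mul_pos ht0 ht0
  -- the complete multipartite graph with `t` parts of size `t`
  set G : SimpleGraph (Fin n) :=
    { Adj := fun u v => (u.val / t ≠ v.val / t)
      symm := ⟨fun u v h => h.symm⟩
      loopless := ⟨fun u h => h rfl⟩ } with hG_def
  refine ⟨n, G, ?_⟩
  have hcard : Fintype.card (Fin n) = n := Fintype.card_fin n
  -- degree lower bound
  have hdeg : ∀ v : Fin n, n - t ≤ {u | G.Adj v u}.ncard := by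
    intro v
    have hcompl : {u | G.Adj v u} = {u : Fin n | u.val / t = v.val / t}ᶜ := by
      ext u
      simp only [hG_def, Set.mem_setOf_eq, Set.mem_compl_iff]
      exact ⟨fun h h' => h h'.symm, fun h h' => h h'.symm⟩
    have hS : {u : Fin n | u.val / t = v.val / t}.ncard ≤ t := by
      have hinj : Set.InjOn (fun u : Fin n => (⟨u.val % t, Nat.mod_lt _ ht0⟩ : Fin t))
          {u : Fin n | u.val / t = v.val / t} := by
        intro a ha b hb hab
        simp only [Set.mem_setOf_eq] at ha hb
        have hmod : a.val % t = b.val % t := by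
          simpa using congrArg Fin.val hab
        have : a.val = b.val := by
          have h1 := Nat.div_add_mod a.val t
          have h2 := Nat.div_add_mod b.val t
          rw [ha] at h1; rw [hb] at h2
          omega
        exact Fin.ext this
      calc {u : Fin n | u.val / t = v.val / t}.ncard
          = ((fun u : Fin n => (⟨u.val % t, Nat.mod_lt _ ht0⟩ : Fin t)) ''
              {u : Fin n | u.val / t = v.val / t}).ncard :=
            (Set.ncard_image_of_injOn hinj).symm
        _ ≤ (Set.univ : Set (Fin t)).ncard := Set.ncard_le_ncard (Set.subset_univ _)
        _ = t := by simp [Set.ncard_univ]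
    have hadd : {u : Fin n | u.val / t = v.val / t}.ncard
        + {u : Fin n | u.val / t = v.val / t}ᶜ.ncard = n := by
      rw [Set.ncard_add_ncard_compl]
      simp [Nat.card_eq_fintype_card]
    rw [hcompl]
    omega
  -- chromatic number bound
  have hχ : G.chromaticNumber.toNat ≤ t := by
    have hcol : G.Colorable t := by
      refine ⟨SimpleGraph.Coloring.mk
        (fun v => (⟨v.val / t, ?_⟩ : Fin t)) ?_⟩
      · have hv : v.val < t * t := v.isLt
        exact Nat.div_lt_of_lt_mul hv
      · intro u w hadj h
        have : u.val / t = w.val / t := by simpa using congrArg Fin.val h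
        exact hadj this
    have h1 : G.chromaticNumber ≤ (t : ℕ∞) := hcol.chromaticNumber_le
    have h2 : G.chromaticNumber ≠ ⊤ := by
      exact ne_top_of_le_ne_top (by simp) h1
    rw [← ENat.toNat_coe t]
    exact ENat.toNat_le_toNat h1 (by simp)
  -- marking number lower bound
  have hmark : n - t < markingNumber G := by
    have hmem : markingNumber G ∈
        {k | MakerWinsMark G k (Fintype.card (Fin n)) ∅ true} := by
      apply Nat.sInf_mem
      refine ⟨Fintype.card (Fin n), ?_⟩
      exact makerWinsMark_card G _ ∅ true (by simp)
    have hne : (∅ : Set (Fin n)) ≠ Set.univ := by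
      have : (⟨0, hn0⟩ : Fin n) ∈ (Set.univ : Set (Fin n)) := Set.mem_univ _
      intro h; rw [← h] at this; exact this
    exact degree_lt_of_makerWinsMark G (n - t) (markingNumber G) hdeg _ ∅ true hmem hne
  -- final arithmetic
  have htn : t ≤ n := Nat.le_mul_of_pos_left t ht0
  have hm : (n : ℝ) - t + 1 ≤ (markingNumber G : ℝ) := by
    have : n - t + 1 ≤ markingNumber G := by omega
    have h : ((n - t + 1 : ℕ) : ℝ) ≤ (markingNumber G : ℝ) := Nat.cast_le.mpr this
    rw [Nat.cast_add, Nat.cast_sub htn, Nat.cast_one] at h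
    linarith
  have hc : (G.chromaticNumber.toNat : ℝ) ≤ t := by exact_mod_cast hχ
  have hnr : (n : ℝ) = (t : ℝ) * t := by rw [hn_def]; push_cast; ring
  have ht1 : (1 : ℝ) ≤ t := by exact_mod_cast ht0
  have hεn : (2 : ℝ) * t < ε * n := by
    rw [hnr]
    calc (2 : ℝ) * t < (ε * t) * t := by nlinarith
    _ = ε * ((t : ℝ) * t) := by ring
  have : (markingNumber G : ℝ) - (G.chromaticNumber.toNat : ℝ) ≥ (n : ℝ) - 2 * t + 1 := by
    linarith
  have hfin : (n : ℝ) - 2 * t + 1 > (1 - ε) * n := by nlinarith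
  linarith

end GameCol
end

section
/- For every integer r ≥ 1, the marking number of the Turán graph T(r²,r) (the complete r-partite graph on r² vertices with all parts of size r) satisfies m(T(r²,r)) ≥ r(r−1). -/
open Function

namespace GameCol

variable {V : Type*} [Fintype V] [DecidableEq V]

set_option linter.unusedSectionVars false in
lemma ncard_unmarked_insert (M : Set V) (v : V) (hv : v ∉ M) :
    (Set.univ \ insert v M).ncard + 1 = (Set.univ \ M).ncard := by
  have h1 : Set.univ \ insert v M = (Set.univ \ M) \ {v} := by
    ext u; simp only [Set.mem_diff, Set.mem_univ, true_and, Set.mem_insert_iff,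
      Set.mem_singleton_iff]; tauto
  rw [h1]
  exact Set.ncard_diff_singleton_add_one (by simp [hv])

lemma maker_wins_card (G : SimpleGraph V) :
    ∀ fuel (M : Set V) (b : Bool), (Set.univ \ M).ncard ≤ fuel →
      MakerWinsMark G (Fintype.card V) fuel M b := by
  intro fuel
  induction fuel with
  | zero =>
    intro M b h v
    by_contra hv
    have hmem : v ∈ Set.univ \ M := ⟨trivial, hv⟩
    have h0 := Set.ncard_eq_zero (Set.toFinite (Set.univ \ M)) |>.mp (Nat.le_zero.mp h)
    rw [h0] at hmem
    exact hmem
  | succ n ih =>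
    intro M b h
    by_cases hM : ∀ v, v ∈ M
    · cases b <;> exact Or.inl hM
    · push_neg at hM
      obtain ⟨v, hv⟩ := hM
      have hleg : ∀ w, w ∉ M → MarkLegal G (Fintype.card V) M w := by
        intro w hw
        refine ⟨hw, ?_⟩
        have hsub : M ∩ {u | G.Adj w u} ⊂ Set.univ := by
          refine (Set.ssubset_univ_iff).mpr (fun hEq => ?_)
          have : w ∈ M ∩ {u | G.Adj w u} := hEq ▸ trivial
          exact G.irrefl this.2
        calc (M ∩ {u | G.Adj w u}).ncard < (Set.univ : Set V).ncard :=
              Set.ncard_lt_ncard hsub (Set.toFinite _)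
          _ = Fintype.card V := by rw [Set.ncard_univ, Nat.card_eq_fintype_card]
      have hstep : ∀ w, w ∉ M → (Set.univ \ insert w M).ncard ≤ n := by
        intro w hw
        have := ncard_unmarked_insert M w hw
        omega
      cases b with
      | true => exact Or.inr ⟨v, hleg v hv, ih _ _ (hstep v hv)⟩
      | false =>
        exact Or.inr ⟨⟨v, hleg v hv⟩, fun w hw => ih _ _ (hstep w hw.1)⟩


lemma no_legal (r k : ℕ) (hr : 2 ≤ r) (hk : k + 1 ≤ r ^ 2 - r)
    (M : Set (Fin (r ^ 2))) (hU : (Set.univ \ M).ncard ≤ 2)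
    (v : Fin (r ^ 2)) (hv : v ∉ M) :
    ¬ MarkLegal (SimpleGraph.turanGraph (r ^ 2) r) k M v := by
  rintro ⟨-, hlt⟩
  set G := SimpleGraph.turanGraph (r ^ 2) r with hG
  set A : Set (Fin (r ^ 2)) := {u | G.Adj v u} with hA
  set U : Set (Fin (r ^ 2)) := Set.univ \ M with hUdef
  have hrpos : 0 < r := by omega
  -- non-neighbours of v number at most r
  have hP : (Set.univ \ A).ncard ≤ r := by
    have : (Set.univ \ A).ncard ≤ (Set.univ : Set (Fin r)).ncard := by
      apply Set.ncard_le_ncard_of_injOn (fun u => (⟨u.val / r, by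
        have h2 : (u : ℕ) < r * r := by rw [← pow_two]; exact u.isLt
        exact Nat.div_lt_of_lt_mul h2⟩ : Fin r))
      · intro a _; trivial
      · intro a ha b hb hab
        have ha' : (a : ℕ) % r = (v : ℕ) % r := by
          have := ha.2
          simp only [hA, hG, SimpleGraph.turanGraph, Set.mem_setOf_eq] at this
          omega
        have hb' : (b : ℕ) % r = (v : ℕ) % r := by
          have := hb.2
          simp only [hA, hG, SimpleGraph.turanGraph, Set.mem_setOf_eq] at this
          omega
        have hdiv : (a : ℕ) / r = (b : ℕ) / r := by
          simpa using congrArg Fin.val hab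
        have : (a : ℕ) = (b : ℕ) := by
          conv_lhs => rw [← Nat.div_add_mod (a : ℕ) r]
          conv_rhs => rw [← Nat.div_add_mod (b : ℕ) r]
          rw [hdiv, ha', hb']
        exact Fin.val_injective this
    rw [Set.ncard_univ, Nat.card_eq_fintype_card, Fintype.card_fin] at this
    exact this
  have hcardV : (Set.univ : Set (Fin (r ^ 2))).ncard = r ^ 2 := by
    rw [Set.ncard_univ, Nat.card_eq_fintype_card, Fintype.card_fin]
  -- |A| ≥ r^2 - r
  have hAcard : r ^ 2 - r ≤ A.ncard := by
    have h1 := Set.ncard_inter_add_ncard_diff_eq_ncard (Set.univ : Set (Fin (r ^ 2))) A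
      (Set.toFinite _)
    rw [Set.univ_inter, hcardV] at h1
    omega
  -- v is unmarked, so the unmarked neighbours of v number at most 1
  have hvU : v ∈ U := ⟨trivial, hv⟩
  have hAU : (A ∩ U).ncard ≤ 1 := by
    have hsub : A ∩ U ⊆ U \ {v} := by
      rintro u ⟨huA, huU⟩
      refine ⟨huU, ?_⟩
      simp only [Set.mem_singleton_iff]
      rintro rfl
      exact G.irrefl huA
    have := Set.ncard_diff_singleton_add_one hvU (Set.toFinite U)
    have := Set.ncard_le_ncard hsub (Set.toFinite _)
    omega
  -- M ∩ A = A \ U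
  have hMA : M ∩ A = A \ U := by
    ext u
    simp only [Set.mem_inter_iff, Set.mem_diff, hUdef, Set.mem_univ, true_and]
    tauto
  have h2 := Set.ncard_inter_add_ncard_diff_eq_ncard A U (Set.toFinite _)
  rw [hMA] at hlt
  omega

lemma breaker_wins (r k : ℕ) (hr : 2 ≤ r) (hk : k + 1 ≤ r ^ 2 - r) :
    ∀ fuel (M : Set (Fin (r ^ 2))) (b : Bool), 2 ≤ (Set.univ \ M).ncard →
      ¬ MakerWinsMark (SimpleGraph.turanGraph (r ^ 2) r) k fuel M b := by
  intro fuel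
  induction fuel with
  | zero =>
    intro M b h hw
    have : (Set.univ \ M) = ∅ := by
      ext u; simp [hw u]
    rw [this] at h
    simp at h
  | succ n ih =>
    intro M b h hw
    have hnotfull : ¬ ∀ v, v ∈ M := by
      intro hall
      have : (Set.univ \ M) = ∅ := by ext u; simp [hall u]
      rw [this] at h; simp at h
    -- case on whether exactly 2 unmarked
    by_cases h2 : (Set.univ \ M).ncard ≤ 2
    · -- no legal moves at all
      have hno : ∀ v, ¬ MarkLegal (SimpleGraph.turanGraph (r ^ 2) r) k M v := by
        intro v hleg
        exact no_legal r k hr hk M h2 v hleg.1 hleg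
      cases b with
      | true =>
        rcases hw with hfull | ⟨v, hleg, -⟩
        · exact hnotfull hfull
        · exact hno v hleg
      | false =>
        rcases hw with hfull | ⟨⟨v, hleg⟩, -⟩
        · exact hnotfull hfull
        · exact hno v hleg
    · push_neg at h2
      have hstep : ∀ v, v ∉ M → 2 ≤ (Set.univ \ insert v M).ncard := by
        intro v hv
        have h1 : Set.univ \ insert v M = (Set.univ \ M) \ {v} := by
          ext u
          simp only [Set.mem_diff, Set.mem_univ, true_and, Set.mem_insert_iff,
            Set.mem_singleton_iff]
          tauto
        have := Set.ncard_diff_singleton_add_one (show v ∈ Set.univ \ M from ⟨trivial, hv⟩)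
          (Set.toFinite _)
        rw [h1]
        omega
      cases b with
      | true =>
        rcases hw with hfull | ⟨v, hleg, hwin⟩
        · exact hnotfull hfull
        · exact ih _ _ (hstep v hleg.1) hwin
      | false =>
        rcases hw with hfull | ⟨⟨v, hleg⟩, hall⟩
        · exact hnotfull hfull
        · exact ih _ _ (hstep v hleg.1) (hall v hleg)

/-- For every `r ≥ 1`, the marking number of the Turán graph
`T(r²,r)` is at least `r(r−1)`. -/
theorem markingNumber_turan_ge (r : ℕ) (hr : 1 ≤ r) :
    r * (r - 1) ≤ markingNumber (SimpleGraph.turanGraph (r ^ 2) r) := by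
  rcases Nat.lt_or_ge r 2 with h | hr2
  · interval_cases r
    simp
  · have hmul : r * (r - 1) = r ^ 2 - r := by
      rw [Nat.mul_sub, mul_one, pow_two]
    have hmem : MakerWinsMark (SimpleGraph.turanGraph (r ^ 2) r) (Fintype.card (Fin (r ^ 2)))
        (Fintype.card (Fin (r ^ 2))) ∅ true := by
      apply maker_wins_card
      rw [Set.diff_empty, Set.ncard_univ, Nat.card_eq_fintype_card]
    refine le_csInf ⟨_, hmem⟩ ?_
    intro k hk
    by_contra hlt
    push_neg at hlt
    rw [hmul] at hlt
    have hk' : k + 1 ≤ r ^ 2 - r := hlt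
    have h2 : 2 ≤ (Set.univ \ (∅ : Set (Fin (r ^ 2)))).ncard := by
      rw [Set.diff_empty, Set.ncard_univ, Nat.card_eq_fintype_card, Fintype.card_fin]
      nlinarith
    exact breaker_wins r k hr2 hk' (Fintype.card (Fin (r ^ 2))) ∅ true h2 hk

end GameCol
end

section
/- Let G be the six-vertex graph formed by the disjoint union of a four-cycle with a pendant edge attached and an isolated vertex. Then χ_gb(G) = 3 and χ_g(G) = 2; in particular, allowing Breaker to play blanks can strictly increase the number of colours Maker needs. -/
open Function

namespace GameCol

variable {V : Type*} [Fintype V] [DecidableEq V]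

/-! ### Decidability instances and the computation -/

instance {G : SimpleGraph V} [DecidableRel G.Adj] {k f v c} : Decidable (ColLegal G k f v c) := by
  unfold ColLegal; infer_instance

instance {f : V → Option ℕ} : Decidable (FullC f) := by unfold FullC; infer_instance

instance decMWC (G : SimpleGraph V) [DecidableRel G.Adj] (k : ℕ) :
    ∀ (fuel : ℕ) (f : V → Option ℕ) (b : Bool), Decidable (MakerWinsC G k fuel f b)
  | 0, f, _ => inferInstanceAs (Decidable (FullC f))
  | fuel + 1, f, true => by
      haveI I : ∀ f b, Decidable (MakerWinsC G k fuel f b) := decMWC G k fuel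
      exact decidable_of_iff
        (FullC f ∨ ∃ v, ∃ c ∈ Finset.range k,
          ColLegal G k f v c ∧ MakerWinsC G k fuel (update f v (some c)) false)
        (by
          rw [MakerWinsC]
          constructor
          · rintro (h | ⟨v, c, _, hc, hw⟩)
            · exact Or.inl h
            · exact Or.inr ⟨v, c, hc, hw⟩
          · rintro (h | ⟨v, c, hc, hw⟩)
            · exact Or.inl h
            · exact Or.inr ⟨v, c, Finset.mem_range.2 hc.1, hc, hw⟩)
  | fuel + 1, f, false => by
      haveI I : ∀ f b, Decidable (MakerWinsC G k fuel f b) := decMWC G k fuel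
      exact decidable_of_iff
        (FullC f ∨ ((∃ v, ∃ c ∈ Finset.range k, ColLegal G k f v c) ∧
          ∀ v, ∀ c ∈ Finset.range k, ColLegal G k f v c →
            MakerWinsC G k fuel (update f v (some c)) true))
        (by
          rw [MakerWinsC]
          constructor
          · rintro (h | ⟨⟨v, c, _, hc⟩, hall⟩)
            · exact Or.inl h
            · exact Or.inr ⟨⟨v, c, hc⟩, fun v c hc => hall v c (Finset.mem_range.2 hc.1) hc⟩
          · rintro (h | ⟨⟨v, c, hc⟩, hall⟩)
            · exact Or.inl h
            · exact Or.inr ⟨⟨v, c, Finset.mem_range.2 hc.1, hc⟩, fun v c _ hc => hall v c hc⟩)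

instance {G : SimpleGraph V} [DecidableRel G.Adj] {K f v c} :
    Decidable (BColLegal G K f v c) := by
  unfold BColLegal; infer_instance

instance {f : V → Option (Option ℕ)} : Decidable (AllPlayed f) := by
  unfold AllPlayed; infer_instance

theorem exBIff (G : SimpleGraph V) (K : Finset ℕ) (f : V → Option (Option ℕ)) :
    (∃ v, ∃ c ∈ K, BColLegal G K f v c) ↔ (∃ v c, BColLegal G K f v c) := by
  constructor
  · rintro ⟨v, c, _, hc⟩; exact ⟨v, c, hc⟩
  · rintro ⟨v, c, hc⟩; exact ⟨v, c, hc.1, hc⟩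

instance decExB {G : SimpleGraph V} [DecidableRel G.Adj] {K : Finset ℕ}
    {f : V → Option (Option ℕ)} : Decidable (∃ v c, BColLegal G K f v c) :=
  decidable_of_iff _ (exBIff G K f)

instance decMWB (G : SimpleGraph V) [DecidableRel G.Adj] (K : Finset ℕ) :
    ∀ (fuel : ℕ) (f : V → Option (Option ℕ)) (b : Bool), Decidable (MakerWinsB G K fuel f b)
  | 0, f, _ => inferInstanceAs (Decidable (AllPlayed f))
  | fuel + 1, f, true => by
      haveI I : ∀ f b, Decidable (MakerWinsB G K fuel f b) := decMWB G K fuel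
      exact decidable_of_iff
        (AllPlayed f ∨ ∃ v, ∃ c ∈ K,
          BColLegal G K f v c ∧ MakerWinsB G K fuel (update f v (some (some c))) false)
        (by
          rw [MakerWinsB]
          constructor
          · rintro (h | ⟨v, c, _, hc, hw⟩)
            · exact Or.inl h
            · exact Or.inr ⟨v, c, hc, hw⟩
          · rintro (h | ⟨v, c, hc, hw⟩)
            · exact Or.inl h
            · exact Or.inr ⟨v, c, hc.1, hc, hw⟩)
  | fuel + 1, f, false => by
      haveI I : ∀ f b, Decidable (MakerWinsB G K fuel f b) := decMWB G K fuel
      exact decidable_of_iff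
        (((¬ ∃ v c, BColLegal G K f v c) ∧ AllPlayed f) ∨
          ((∃ v c, BColLegal G K f v c) ∧
            (∀ v, ∀ c ∈ K, BColLegal G K f v c →
              MakerWinsB G K fuel (update f v (some (some c))) true) ∧
            (∀ v, f v = none → MakerWinsB G K fuel (update f v (some none)) true)))
        (by
          rw [MakerWinsB]
          constructor
          · rintro (h | ⟨he, hall, hbl⟩)
            · exact Or.inl h
            · exact Or.inr ⟨he, fun v c hc => hall v c hc.1 hc, hbl⟩
          · rintro (h | ⟨he, hall, hbl⟩)
            · exact Or.inl h
            · exact Or.inr ⟨he, fun v c _ hc => hall v c hc, hbl⟩)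

/-- The six-vertex graph of the theorem. -/
def G6 : SimpleGraph (Fin 6) :=
  SimpleGraph.fromEdgeSet
        {s((0 : Fin 6), (1 : Fin 6)), s((1 : Fin 6), (2 : Fin 6)),
         s((2 : Fin 6), (3 : Fin 6)), s((3 : Fin 6), (0 : Fin 6)),
         s((0 : Fin 6), (4 : Fin 6))}

instance : DecidableRel G6.Adj := fun v w =>
  decidable_of_iff ((s(v, w) = s((0 : Fin 6), 1) ∨ s(v, w) = s((1 : Fin 6), 2) ∨
      s(v, w) = s((2 : Fin 6), 3) ∨ s(v, w) = s((3 : Fin 6), 0) ∨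
      s(v, w) = s((0 : Fin 6), 4)) ∧ v ≠ w)
    (by rw [G6, SimpleGraph.fromEdgeSet_adj]; simp [Set.mem_insert_iff])

set_option maxRecDepth 1000000 in
set_option maxHeartbeats 4000000 in
theorem hB3 : MakerWinsB G6 (Finset.range 3) 6 (fun _ => none) true := by decide

set_option maxRecDepth 1000000 in
set_option maxHeartbeats 4000000 in
theorem hB2 : ¬ MakerWinsB G6 (Finset.range 2) 6 (fun _ => none) true := by decide

set_option maxRecDepth 1000000 in
set_option maxHeartbeats 4000000 in
theorem hB1 : ¬ MakerWinsB G6 (Finset.range 1) 6 (fun _ => none) true := by decide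

set_option maxRecDepth 1000000 in
set_option maxHeartbeats 4000000 in
theorem hB0 : ¬ MakerWinsB G6 (Finset.range 0) 6 (fun _ => none) true := by decide

set_option maxRecDepth 1000000 in
set_option maxHeartbeats 4000000 in
theorem hC2 : MakerWinsC G6 2 6 (fun _ => none) true := by decide

set_option maxRecDepth 1000000 in
set_option maxHeartbeats 4000000 in
theorem hC1 : ¬ MakerWinsC G6 1 6 (fun _ => none) true := by decide

set_option maxRecDepth 1000000 in
set_option maxHeartbeats 4000000 in
theorem hC0 : ¬ MakerWinsC G6 0 6 (fun _ => none) true := by decide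

/-- For the six-vertex graph `G` consisting of a four-cycle with a
pendant edge, together with an isolated vertex, we have `χ_gb(G) = 3` and
`χ_g(G) = 2`; in particular allowing Breaker to play blanks can strictly increase the
number of colours Maker needs. -/
theorem chiGb_eq_three_and_gameChromatic_eq_two :
    chiGb (SimpleGraph.fromEdgeSet
        {s((0 : Fin 6), (1 : Fin 6)), s((1 : Fin 6), (2 : Fin 6)),
         s((2 : Fin 6), (3 : Fin 6)), s((3 : Fin 6), (0 : Fin 6)),
         s((0 : Fin 6), (4 : Fin 6))}) = 3 ∧
    gameChromaticNumber (SimpleGraph.fromEdgeSet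
        {s((0 : Fin 6), (1 : Fin 6)), s((1 : Fin 6), (2 : Fin 6)),
         s((2 : Fin 6), (3 : Fin 6)), s((3 : Fin 6), (0 : Fin 6)),
         s((0 : Fin 6), (4 : Fin 6))}) = 2 := by
  show chiGb G6 = 3 ∧ gameChromaticNumber G6 = 2
  constructor
  · unfold chiGb
    rw [Fintype.card_fin]
    refine le_antisymm (Nat.sInf_le hB3) (le_csInf ⟨3, hB3⟩ ?_)
    intro b hb
    by_contra hlt
    push_neg at hlt
    interval_cases b
    · exact hB0 hb
    · exact hB1 hb
    · exact hB2 hb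
  · unfold gameChromaticNumber
    rw [Fintype.card_fin]
    refine le_antisymm (Nat.sInf_le hC2) (le_csInf ⟨2, hC2⟩ ?_)
    intro b hb
    by_contra hlt
    push_neg at hlt
    interval_cases b
    · exact hC0 hb
    · exact hC1 hb


end GameCol
end
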